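/- If a sequence (φ_n) of setfunctions is quotient-convergent (i.e., for each k the quotient sets Q_k(φ_n) form a Cauchy sequence in Hausdorff distance), then it is crop-convergent (i.e., for each k the crop sets T_k(φ_n) form a Cauchy sequence in Hausdorff distance). -/

import Mathlib

/-- The `k`-crop of a setfunction `φ` along a tuple `A` of sets:
`(φ/A)(I) = φ(⋃_{i∈I} A_i)`. -/
def cropFn {J : Type*} (φ : Set J → ℝ) {k : ℕ} (A : Fin k → Set J) :
    Finset (Fin k) → ℝ :=
  fun I => φ (⋃ i ∈ I, A i)

/-- The set `T_k(φ)` of `k`-crops of `φ`, over tuples of sets from the family `B`. -/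
def crops {J : Type*} (B : Set (Set J)) (φ : Set J → ℝ) (k : ℕ) :
    Set (Finset (Fin k) → ℝ) :=
  {ψ | ∃ A : Fin k → Set J, (∀ i, A i ∈ B) ∧ ψ = cropFn φ A}

/-- The set `Q_k(φ)` of `k`-quotients of `φ`: crops along partitions of `J` into `k`
(possibly empty) sets from `B`. -/
def quotients {J : Type*} (B : Set (Set J)) (φ : Set J → ℝ) (k : ℕ) :
    Set (Finset (Fin k) → ℝ) :=
  {ψ | ∃ A : Fin k → Set J, (∀ i, A i ∈ B) ∧ Pairwise (Function.onFun Disjoint A) ∧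
      (⋃ i, A i) = Set.univ ∧ ψ = cropFn φ A}

open Classical in
/-- Auxiliary: set algebras are closed under finite unions. -/
lemma biUnion_mem_algebra {J : Type*} {B : Set (Set J)} (hempty : ∅ ∈ B)
    (hunion : ∀ X Y, X ∈ B → Y ∈ B → X ∪ Y ∈ B)
    {ι : Type*} (s : Finset ι) (A : ι → Set J) (h : ∀ i ∈ s, A i ∈ B) :
    (⋃ i ∈ s, A i) ∈ B := by
  classical
  induction s using Finset.induction with
  | empty => simpa using hempty
  | insert _ _ hx ih =>
    rw [Finset.set_biUnion_insert]
    exact hunion _ _ (h _ (Finset.mem_insert_self _ _))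
      (ih fun i hi => h i (Finset.mem_insert_of_mem hi))

/-- Auxiliary: set algebras are closed under finite intersections. -/
lemma biInter_mem_algebra {J : Type*} {B : Set (Set J)} (huniv : Set.univ ∈ B)
    (hinter : ∀ X Y, X ∈ B → Y ∈ B → X ∩ Y ∈ B)
    {ι : Type*} (s : Finset ι) (A : ι → Set J) (h : ∀ i ∈ s, A i ∈ B) :
    (⋂ i ∈ s, A i) ∈ B := by
  classical
  induction s using Finset.induction with
  | empty => simpa using huniv
  | insert _ _ hx ih =>
    rw [Finset.set_biInter_insert]
    exact hinter _ _ (h _ (Finset.mem_insert_self _ _))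
      (ih fun i hi => h i (Finset.mem_insert_of_mem hi))

/-- Identify `Fin (2^k)` with subsets of `Fin k`. -/
noncomputable def atomEquiv (k : ℕ) : Finset (Fin k) ≃ Fin (2 ^ k) :=
  Fintype.equivFinOfCardEq (by simp)

open Classical in
/-- The map sending a subset `I ⊆ Fin k` to the set of atoms covering `⋃_{i∈I} A_i`. -/
noncomputable def cropMap (k : ℕ) (I : Finset (Fin k)) : Finset (Fin (2 ^ k)) :=
  Finset.univ.filter (fun j => (((atomEquiv k).symm j) ∩ I).Nonempty)

open Classical in
lemma mem_cropMap {k : ℕ} {I : Finset (Fin k)} {j : Fin (2 ^ k)} :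
    j ∈ cropMap k I ↔ (((atomEquiv k).symm j) ∩ I).Nonempty := by
  simp [cropMap]

open Classical in
/-- The atoms generated by a `k`-tuple of sets. -/
noncomputable def atomsOf {J : Type*} {k : ℕ} (A : Fin k → Set J) (j : Fin (2 ^ k)) :
    Set J :=
  ⋂ i, (if i ∈ (atomEquiv k).symm j then A i else (A i)ᶜ)

open Classical in
lemma mem_atomsOf {J : Type*} {k : ℕ} {A : Fin k → Set J} {j : Fin (2 ^ k)} {x : J} :
    x ∈ atomsOf A j ↔ ∀ i, (x ∈ A i ↔ i ∈ (atomEquiv k).symm j) := by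
  simp only [atomsOf, Set.mem_iInter]
  constructor
  · intro h i
    have := h i
    split_ifs at this with hi
    · exact ⟨fun _ => hi, fun _ => this⟩
    · exact ⟨fun hx => absurd hx this, fun hi' => absurd hi' hi⟩
  · intro h i
    split_ifs with hi
    · exact (h i).mpr hi
    · exact fun hx => hi ((h i).mp hx)

open Classical in
/-- Key set identity: the union over `I` of the `A_i` equals the union of the
corresponding atoms. -/
lemma union_eq_union_atoms {J : Type*} {k : ℕ} (A : Fin k → Set J) (I : Finset (Fin k)) :
    (⋃ i ∈ I, A i) = ⋃ j ∈ cropMap k I, atomsOf A j := by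
  ext x
  simp only [Set.mem_iUnion, exists_prop, cropMap, Finset.mem_filter, Finset.mem_univ,
    true_and]
  constructor
  · rintro ⟨i, hiI, hx⟩
    set S : Finset (Fin k) := Finset.univ.filter (fun i => x ∈ A i) with hS
    refine ⟨atomEquiv k S, ?_, ?_⟩
    · refine ⟨i, Finset.mem_inter.mpr ⟨?_, hiI⟩⟩
      rw [Equiv.symm_apply_apply]
      simp [hS, hx]
    · rw [mem_atomsOf]
      intro i'
      rw [Equiv.symm_apply_apply]
      simp [hS]
  · rintro ⟨j, ⟨i, hi⟩, hx⟩
    rw [Finset.mem_inter] at hi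
    exact ⟨i, hi.2, (mem_atomsOf.mp hx i).mpr hi.1⟩

open Classical in
lemma crops_eq_image {J : Type*} {B : Set (Set J)}
    (hempty : ∅ ∈ B) (huniv : Set.univ ∈ B)
    (hunion : ∀ X Y, X ∈ B → Y ∈ B → X ∪ Y ∈ B)
    (hinter : ∀ X Y, X ∈ B → Y ∈ B → X ∩ Y ∈ B)
    (hcompl : ∀ X, X ∈ B → Xᶜ ∈ B)
    (φ : Set J → ℝ) (k : ℕ) :
    crops B φ k = (fun q => q ∘ cropMap k) '' quotients B φ (2 ^ k) := by
  ext ψ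
  constructor
  · rintro ⟨A, hA, rfl⟩
    refine ⟨cropFn φ (atomsOf A), ⟨atomsOf A, ?_, ?_, ?_, rfl⟩, ?_⟩
    · intro j
      have : atomsOf A j = ⋂ i ∈ (Finset.univ : Finset (Fin k)),
          (if i ∈ (atomEquiv k).symm j then A i else (A i)ᶜ) := by
        simp [atomsOf]
      rw [this]
      refine biInter_mem_algebra huniv hinter _ _ ?_
      intro i _
      split_ifs
      · exact hA i
      · exact hcompl _ (hA i)
    · intro j j' hjj'
      rw [Function.onFun, Set.disjoint_left]
      intro x hx hx'
      apply hjj'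
      apply (atomEquiv k).symm.injective
      ext i
      rw [← mem_atomsOf.mp hx i, mem_atomsOf.mp hx' i]
    · ext x
      simp only [Set.mem_iUnion, Set.mem_univ, iff_true]
      refine ⟨atomEquiv k (Finset.univ.filter (fun i => x ∈ A i)), ?_⟩
      rw [mem_atomsOf]
      intro i
      rw [Equiv.symm_apply_apply]
      simp
    · funext I
      simp only [Function.comp_apply, cropFn]
      congr 1
      exact (union_eq_union_atoms A I).symm
  · rintro ⟨q, ⟨At, hAt, -, -, rfl⟩, rfl⟩
    refine ⟨fun i => ⋃ j ∈ Finset.univ.filter (fun j => i ∈ (atomEquiv k).symm j), At j,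
      fun i => biUnion_mem_algebra hempty hunion _ _ (fun j _ => hAt j), ?_⟩
    funext I
    simp only [Function.comp_apply, cropFn]
    congr 1
    ext x
    constructor
    · intro hx
      rw [Set.mem_iUnion₂] at hx
      obtain ⟨j, hj, hx⟩ := hx
      obtain ⟨i, hi⟩ := mem_cropMap.mp hj
      rw [Finset.mem_inter] at hi
      refine Set.mem_biUnion hi.2 (Set.mem_biUnion ?_ hx)
      exact Finset.mem_filter.mpr ⟨Finset.mem_univ _, hi.1⟩
    · intro hx
      rw [Set.mem_iUnion₂] at hx
      obtain ⟨i, hiI, hx⟩ := hx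
      rw [Set.mem_iUnion₂] at hx
      obtain ⟨j, hij, hx⟩ := hx
      rw [Finset.mem_filter] at hij
      refine Set.mem_biUnion (mem_cropMap.mpr ⟨i, Finset.mem_inter.mpr ⟨hij.2, hiI⟩⟩) hx

/-- If a sequence of (uniformly bounded) setfunctions on a set algebra
is quotient-convergent (for each `k`, the quotient sets form a Cauchy sequence in the
Hausdorff distance), then it is crop-convergent. -/
theorem stmt4 {J : Type*} (B : Set (Set J)) (φ : ℕ → Set J → ℝ)
    (hempty : ∅ ∈ B) (huniv : Set.univ ∈ B)
    (hunion : ∀ X Y, X ∈ B → Y ∈ B → X ∪ Y ∈ B)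
    (hinter : ∀ X Y, X ∈ B → Y ∈ B → X ∩ Y ∈ B)
    (hcompl : ∀ X, X ∈ B → Xᶜ ∈ B)
    (hφ0 : ∀ n, φ n ∅ = 0)
    (hbdd : ∃ C : ℝ, ∀ n X, X ∈ B → |φ n X| ≤ C)
    (hQ : ∀ k : ℕ, ∀ ε : ℝ, 0 < ε → ∃ N : ℕ, ∀ m, N ≤ m → ∀ n, N ≤ n →
      Metric.hausdorffDist (quotients B (φ m) k) (quotients B (φ n) k) ≤ ε) :
    ∀ k : ℕ, ∀ ε : ℝ, 0 < ε → ∃ N : ℕ, ∀ m, N ≤ m → ∀ n, N ≤ n →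
      Metric.hausdorffDist (crops B (φ m) k) (crops B (φ n) k) ≤ ε := by
  classical
  obtain ⟨C, hC⟩ := hbdd
  have hC0 : 0 ≤ C := le_trans (abs_nonneg _) (hC 0 ∅ hempty)
  -- quotients are nonempty
  have hpos : 0 < 2 ^ 1 := by norm_num
  have hne : ∀ (n : ℕ) (k : ℕ), (quotients B (φ n) (2 ^ k)).Nonempty := by
    intro n k
    have hk : 0 < 2 ^ k := Nat.pow_pos (by norm_num)
    refine ⟨cropFn (φ n) (fun j => if j = ⟨0, hk⟩ then Set.univ else ∅),
      fun j => if j = ⟨0, hk⟩ then Set.univ else ∅, ?_, ?_, ?_, rfl⟩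
    · intro j
      by_cases h : j = ⟨0, hk⟩ <;> simp_all [huniv, hempty]
    · intro j j' hjj'
      rw [Function.onFun]
      rcases eq_or_ne j ⟨0, hk⟩ with h | h
      · have : j' ≠ ⟨0, hk⟩ := by rw [← h]; exact hjj'.symm
        simp_all
      · simp_all
    · ext x
      simp only [Set.mem_iUnion, Set.mem_univ, iff_true]
      exact ⟨⟨0, hk⟩, by simp⟩
  -- quotients are bounded
  have hbdd' : ∀ (n : ℕ) (k : ℕ),
      quotients B (φ n) (2 ^ k) ⊆ Metric.closedBall 0 C := by
    intro n k q hq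
    obtain ⟨A, hA, -, -, rfl⟩ := hq
    rw [Metric.mem_closedBall, dist_pi_le_iff hC0]
    intro I
    rw [Real.dist_eq]
    simpa [cropFn] using hC n _ (biUnion_mem_algebra hempty hunion I A (fun i _ => hA i))
  have hedist : ∀ (m n : ℕ) (k : ℕ),
      EMetric.hausdorffEdist (quotients B (φ m) (2 ^ k)) (quotients B (φ n) (2 ^ k)) ≠ ⊤ := by
    intro m n k
    apply Metric.hausdorffEdist_ne_top_of_nonempty_of_bounded (hne m k) (hne n k)
    · exact Metric.isBounded_closedBall.subset (hbdd' m k)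
    · exact Metric.isBounded_closedBall.subset (hbdd' n k)
  intro k ε hε
  obtain ⟨N, hN⟩ := hQ (2 ^ k) (ε / 2) (by linarith)
  refine ⟨N, fun m hm n hn => ?_⟩
  have hQmn := hN m hm n hn
  -- 1-Lipschitz composition
  have hlip : ∀ (q q' : Finset (Fin (2 ^ k)) → ℝ),
      dist (q ∘ cropMap k) (q' ∘ cropMap k) ≤ dist q q' := by
    intro q q'
    rw [dist_pi_le_iff dist_nonneg]
    intro I
    exact dist_le_pi_dist q q' (cropMap k I)
  rw [crops_eq_image hempty huniv hunion hinter hcompl (φ m) k,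
    crops_eq_image hempty huniv hunion hinter hcompl (φ n) k]
  apply Metric.hausdorffDist_le_of_mem_dist (le_of_lt hε)
  · rintro x ⟨q, hq, rfl⟩
    obtain ⟨q', hq', hd⟩ := Metric.exists_dist_lt_of_hausdorffDist_lt hq
      (hQmn.trans_lt (half_lt_self hε)) (hedist m n k)
    exact ⟨q' ∘ cropMap k, ⟨q', hq', rfl⟩, le_trans (hlip q q') (le_of_lt hd)⟩
  · rintro y ⟨q, hq, rfl⟩
    obtain ⟨q', hq', hd⟩ := Metric.exists_dist_lt_of_hausdorffDist_lt' hq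
      (hQmn.trans_lt (half_lt_self hε)) (hedist m n k)
    exact ⟨q' ∘ cropMap k, ⟨q', hq', rfl⟩,
      le_trans (hlip q q') (le_of_lt (dist_comm q' q ▸ hd))⟩
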